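/- arXiv:1004.5481 — 2 statements merged into one kernel-verified Lean document; each statement's English description precedes it below -/
import Mathlib

section
/- Let i be an index with a_i > b_i, and let l_i = max{ l ∈ ℕ : t^{ω_i + l g_1}* ∈ (0 :_{G(m)} 𝓜^r) }. Then t^{ω_i + l g_1}* ∈ (0 :_{G(m)} 𝓜^r) for every l = 0, 1, …, l_i. -/
/-!
Common setup: the numerical semigroup ring `R = k[[t^S]]`, its maximal ideal `m`,
the associated graded ring `G(m)` (realized as the Rees algebra `R[mt]` modulo
the extension of `m`, the standard presentation of `⊕_{h≥0} m^h/m^{h+1}`),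
the homogeneous maximal ideal `𝓜`, the reduction number `r`, initial forms
`t^s*`, Apery sets, the invariants `a_i`, `b_i`, `l_i`, the order function,
the partial order `≤_M`, symmetry, `M`-purity, Buchsbaumness and
Cohen-Macaulayness (via their characterizations `(0:𝓜) = (0:𝓜^r)` and
`(0:𝓜^r) = 0` valid in this one-dimensional graded setting).
-/

set_option maxHeartbeats 1000000
set_option synthInstance.maxHeartbeats 1000000

open scoped Pointwise
open Polynomial

noncomputable section

namespace NumSgrp

/-- The numerical semigroup `S` generated by `g 0 < g 1 < ⋯ < g n`. -/
def S {n : ℕ} (g : Fin (n + 1) → ℕ) : AddSubmonoid ℕ := AddSubmonoid.closure (Set.range g)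

/-- `setM g h` is the `h`-fold sumset `M + ⋯ + M` of the maximal ideal
`M = S \ {0}`; by convention `setM g 0 = S` (corresponding to `m^0 = R`). -/
def setM {n : ℕ} (g : Fin (n + 1) → ℕ) : ℕ → Set ℕ
  | 0 => (S g : Set ℕ)
  | h+1 => ({u : ℕ | u ∈ S g ∧ u ≠ 0} + setM g h : Set ℕ)

/-- `ordS g s` = ord(s) = max { h | s ∈ hM }. -/
def ordS {n : ℕ} (g : Fin (n + 1) → ℕ) (s : ℕ) : ℕ := sSup {h | s ∈ setM g h}

/-- `ap g i` = ω_i, the least element of `S` congruent to `i` modulo `g 0`. -/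
def ap {n : ℕ} (g : Fin (n + 1) → ℕ) (i : ℕ) : ℕ := sInf {s | s ∈ S g ∧ s % g 0 = i}

/-- The Apery set `Ap_{g_1}(S) = {ω_0, …, ω_{g_1-1}}`. -/
def apSet {n : ℕ} (g : Fin (n + 1) → ℕ) : Set ℕ := {s | ∃ i < g 0, s = ap g i}

/-- The blow-up `S' = ⟨g_1, g_2 - g_1, …, g_n - g_1⟩`. -/
def S' {n : ℕ} (g : Fin (n + 1) → ℕ) : AddSubmonoid ℕ :=
  AddSubmonoid.closure (insert (g 0) (Set.range fun i => g i - g 0))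

/-- `ap' g i` = ω'_i, the least element of `S'` congruent to `i` modulo `g 0`. -/
def ap' {n : ℕ} (g : Fin (n + 1) → ℕ) (i : ℕ) : ℕ := sInf {s | s ∈ S' g ∧ s % g 0 = i}

/-- The Apery set `Ap_{g_1}(S') = {ω'_0, …, ω'_{g_1-1}}`. -/
def apSet' {n : ℕ} (g : Fin (n + 1) → ℕ) : Set ℕ := {s | ∃ i < g 0, s = ap' g i}

/-- `aa g i` = a_i, the unique integer with ω_i = ω'_i + a_i g_1. -/
def aa {n : ℕ} (g : Fin (n + 1) → ℕ) (i : ℕ) : ℕ := (ap g i - ap' g i) / g 0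

/-- `bb g i` = b_i = ord(ω_i). -/
def bb {n : ℕ} (g : Fin (n + 1) → ℕ) (i : ℕ) : ℕ := ordS g (ap g i)

/-- The partial order `u ≤_M u'`: there is `s ∈ S` with `u + s = u'` and
`ord u + ord s = ord u'`. -/
def leM {n : ℕ} (g : Fin (n + 1) → ℕ) (u v : ℕ) : Prop :=
  ∃ s ∈ S g, u + s = v ∧ ordS g u + ordS g s = ordS g v

/-- `maxAp_M(S)`: the maximal elements of the Apery set w.r.t. `≤_M`. -/
def maxAp {n : ℕ} (g : Fin (n + 1) → ℕ) : Set ℕ :=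
  {u | u ∈ apSet g ∧ ∀ v ∈ apSet g, leM g u v → v = u}

/-- `S` is `M`-pure: all elements of `maxAp_M(S)` have the same order. -/
def MPure {n : ℕ} (g : Fin (n + 1) → ℕ) : Prop :=
  ∀ u ∈ maxAp g, ∀ v ∈ maxAp g, ordS g u = ordS g v

/-- `S` viewed inside `ℤ`. -/
def SZ {n : ℕ} (g : Fin (n + 1) → ℕ) : Set ℤ := {x | ∃ s ∈ S g, (s : ℤ) = x}

/-- The Frobenius number `g(S) = max (ℤ \ S)`. -/
def frob {n : ℕ} (g : Fin (n + 1) → ℕ) : ℤ := sSup {x : ℤ | x ∉ SZ g}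

/-- `S` is symmetric: for every `x ∈ ℤ`, `x ∉ S` implies `g(S) - x ∈ S`. -/
def IsSymm {n : ℕ} (g : Fin (n + 1) → ℕ) : Prop :=
  ∀ x : ℤ, x ∉ SZ g → frob g - x ∈ SZ g

/-- Hypotheses: `g 0 < g 1 < ⋯ < g n` is a minimal system of generators with
gcd 1, so `S` is a numerical semigroup minimally generated by the `g i`. -/
structure MinGen {n : ℕ} (g : Fin (n + 1) → ℕ) : Prop where
  smono : StrictMono g
  minimal : ∀ i, g i ∉ AddSubmonoid.closure (Set.range g \ {g i})
  gcdeq : Finset.univ.gcd g = 1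

variable (k : Type*) [Field k] {n : ℕ} (g : Fin (n + 1) → ℕ)

/-- `R = k[[t^S]]`: the subalgebra of `k[[t]]` of power series supported in `S`. -/
def Rsub : Subalgebra k (PowerSeries k) where
  carrier := {f | ∀ i, PowerSeries.coeff i f ≠ 0 → i ∈ S g}
  zero_mem' := by intro i hi; simp at hi
  one_mem' := by
    intro i hi
    by_cases h : i = 0
    · exact h ▸ (S g).zero_mem
    · rw [PowerSeries.coeff_one, if_neg h] at hi; exact absurd rfl hi
  add_mem' := by
    intro a b ha hb i hi
    rw [map_add] at hi
    by_cases h : PowerSeries.coeff i a ≠ 0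
    · exact ha i h
    · push_neg at h
      rw [h, zero_add] at hi
      exact hb i hi
  mul_mem' := by
    intro a b ha hb i hi
    rw [PowerSeries.coeff_mul] at hi
    obtain ⟨p, hp, hne⟩ := Finset.exists_ne_zero_of_sum_ne_zero hi
    have h1 := ha p.1 (left_ne_zero_of_mul hne)
    have h2 := hb p.2 (right_ne_zero_of_mul hne)
    exact (Finset.HasAntidiagonal.mem_antidiagonal.mp hp) ▸ add_mem h1 h2
  algebraMap_mem' := by
    intro r i hi
    by_cases h : i = 0
    · exact h ▸ (S g).zero_mem
    · exfalso
      apply hi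
      have : (algebraMap k (PowerSeries k)) r = PowerSeries.C r := rfl
      rw [this, PowerSeries.coeff_C, if_neg h]

open Classical in
/-- `t^s` as an element of `R` (defined to be `0` if `s ∉ S`). -/
def tR (s : ℕ) : Rsub k g :=
  if h : s ∈ S g then
    ⟨PowerSeries.monomial s 1, by
      intro i hi
      rw [PowerSeries.coeff_monomial] at hi
      split at hi
      · next heq => exact heq ▸ h
      · exact absurd rfl hi⟩
  else 0

/-- `m = (t^{g_1}, …, t^{g_n})`, the maximal ideal of `R`. -/
def mI : Ideal (Rsub k g) := Ideal.span (Set.range fun i => tR k g (g i))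

lemma tR_mul {s u : ℕ} (hs : s ∈ S g) (hu : u ∈ S g) :
    tR k g (s + u) = tR k g s * tR k g u := by
  simp only [tR, dif_pos hs, dif_pos hu, dif_pos (add_mem hs hu)]
  apply Subtype.ext
  simp only [MulMemClass.coe_mul]
  show (PowerSeries.monomial (s + u)) (1 : k) =
    (PowerSeries.monomial s) 1 * (PowerSeries.monomial u) 1
  rw [← PowerSeries.X_pow_eq, ← PowerSeries.X_pow_eq, ← PowerSeries.X_pow_eq, pow_add]

lemma setM_subset : ∀ h : ℕ, setM g h ⊆ (S g : Set ℕ) := by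
  intro h
  induction h with
  | zero => exact fun s hs => hs
  | succ h ih =>
    rintro s ⟨u, hu, v, hv, huv⟩
    have : u + v = s := huv
    exact this ▸ add_mem hu.1 (ih hv)

lemma le_of_mem_setM : ∀ h : ℕ, ∀ s ∈ setM g h, h ≤ s := by
  intro h
  induction h with
  | zero => exact fun s _ => Nat.zero_le s
  | succ h ih =>
    rintro s ⟨u, hu, v, hv, huv⟩
    have hsum : u + v = s := huv
    have h1 : 1 ≤ u := Nat.one_le_iff_ne_zero.mpr hu.2
    have h2 := ih v hv
    omega

lemma tR_mem_mI {u : ℕ} (hu : u ∈ S g) (hne : u ≠ 0) : tR k g u ∈ mI k g := by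
  have key : ∀ (x : ℕ) (_ : x ∈ S g), x = 0 ∨ tR k g x ∈ mI k g := by
    intro x hx
    induction hx using AddSubmonoid.closure_induction with
    | mem y hy =>
      obtain ⟨i, rfl⟩ := hy
      exact Or.inr (Ideal.subset_span ⟨i, rfl⟩)
    | zero => exact Or.inl rfl
    | add x y hx hy px py =>
      rcases px with rfl | px
      · rcases py with rfl | py
        · exact Or.inl rfl
        · exact Or.inr (by rwa [zero_add])
      · refine Or.inr ?_
        rw [tR_mul k g hx hy]
        exact Ideal.mul_mem_right _ _ px
  rcases key u hu with rfl | h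
  · exact absurd rfl hne
  · exact h

lemma tR_mem_pow_of_setM : ∀ h : ℕ, ∀ s ∈ setM g h, tR k g s ∈ (mI k g) ^ h := by
  intro h
  induction h with
  | zero =>
    intro s _
    rw [pow_zero, Ideal.one_eq_top]
    exact Submodule.mem_top
  | succ h ih =>
    rintro s ⟨u, hu, v, hv, huv⟩
    have hsum : u + v = s := huv
    rw [← hsum, tR_mul k g hu.1 (setM_subset g h hv), pow_succ, mul_comm (tR k g u)]
    exact Ideal.mul_mem_mul (ih v hv) (tR_mem_mI k g hu.1 hu.2)

lemma mem_setM_ordS {s : ℕ} (hs : s ∈ S g) : s ∈ setM g (ordS g s) := by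
  have : ordS g s ∈ {h | s ∈ setM g h} :=
    Nat.sSup_mem (⟨0, hs⟩ : Set.Nonempty {h | s ∈ setM g h})
      ⟨s, fun h hh => le_of_mem_setM g h s hh⟩
  exact this

lemma tR_mem_pow (s : ℕ) : tR k g s ∈ (mI k g) ^ (ordS g s) := by
  by_cases hs : s ∈ S g
  · exact tR_mem_pow_of_setM k g _ s (mem_setM_ordS g hs)
  · rw [tR, dif_neg hs]
    exact zero_mem _

/-- `G(m) = ⊕_{h ≥ 0} m^h/m^{h+1}`, realized as the Rees algebra `R[mt]`
modulo the extension of `m` (the standard presentation of the associated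
graded ring of a local ring). -/
abbrev grG : Type _ :=
  (reesAlgebra (mI k g)) ⧸
    (Ideal.map (algebraMap (Rsub k g) (reesAlgebra (mI k g))) (mI k g))

/-- The homogeneous maximal ideal `𝓜 = m/m² ⊕ m²/m³ ⊕ ⋯` of `G(m)`: the image
of the ideal of elements of the Rees algebra whose degree-0 coefficient lies
in `m`. -/
def MM : Ideal (grG k g) :=
  Ideal.map (Ideal.Quotient.mk _)
    (Ideal.comap ((Polynomial.evalRingHom (0 : Rsub k g)).comp
      (reesAlgebra (mI k g)).val.toRingHom) (mI k g))

/-- The reduction number `r` of `m`: the least `r` with `m^{r+1} = t^{g_1}·m^r`. -/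
def rnum : ℕ :=
  sInf {j | (mI k g) ^ (j + 1) = Ideal.span {tR k g (g 0)} * (mI k g) ^ j}

/-- The initial form `t^s*` of `t^s` in `G(m)`, i.e. the image of `t^s` in
`m^{ord(s)}/m^{ord(s)+1}` (the degree-`ord(s)` component of `G(m)`). -/
def tstar (s : ℕ) : grG k g :=
  Ideal.Quotient.mk _
    ⟨(Polynomial.monomial (ordS g s)) (tR k g s),
      reesAlgebra.monomial_mem.mpr (tR_mem_pow k g s)⟩

/-- `(0 :_{G(m)} 𝓜^r) = H⁰_𝓜(G(m))`. -/
def annM : Ideal (grG k g) := Submodule.colon ⊥ ((MM k g ^ rnum k g : Ideal (grG k g)) : Set (grG k g))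

/-- `(0 :_{G(m)} 𝓜)`. -/
def ann1 : Ideal (grG k g) := Submodule.colon ⊥ (MM k g : Set (grG k g))

/-- `G(m)` is Buchsbaum iff `(0 :_{G(m)} 𝓜) = (0 :_{G(m)} 𝓜^r)`. -/
def IsBuchsbaum : Prop := ann1 k g = annM k g

/-- `G(m)` is Cohen-Macaulay iff `(0 :_{G(m)} 𝓜^r) = 0`. -/
def IsCM : Prop := annM k g = ⊥

/-- `l_i = max { l | t^{ω_i + l g_1}* ∈ (0 :_{G(m)} 𝓜^r) }`. -/
def lℓ (i : ℕ) : ℕ := sSup {l | tstar k g (ap g i + l * g 0) ∈ annM k g}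

/-- The length of a `G(m)`-module: the Krull dimension of its lattice of
submodules, i.e. the longest length of a chain of submodules. -/
def lenOf (M : Type*) [AddCommGroup M] [Module (grG k g) M] : WithBot ℕ∞ :=
  Order.krullDim (Submodule (grG k g) M)

/-- The socle `(0 :_{G/ξG} 𝓜) = ((ξ) :_G 𝓜)/(ξ)` of `G(m)/ξ·G(m)`, where
`ξ = t^{g_1}*` is the canonical degree-one homogeneous parameter of `G(m)`. -/
abbrev socQ : Type _ :=
  ↥(Submodule.colon (Ideal.span {tstar k g (g 0)}) (MM k g)) ⧸
    (Submodule.comap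
      (Submodule.colon (Ideal.span {tstar k g (g 0)}) (MM k g)).subtype
      (Ideal.span {tstar k g (g 0)}))

/-- `G(m)` is Gorenstein: Cohen-Macaulay of type 1, i.e. Cohen-Macaulay and
the socle of `G(m)` modulo the homogeneous parameter `ξ = t^{g_1}*` has
length 1 as a `G(m)`-module. -/
def IsGor : Prop := IsCM k g ∧ lenOf k g (socQ k g) = 1


section Comb

variable {n : ℕ} {g : Fin (n + 1) → ℕ}

lemma g_mem_S (j : Fin (n + 1)) : g j ∈ S g :=
  AddSubmonoid.subset_closure ⟨j, rfl⟩

lemma g0_ne_zero (hg : MinGen g) : g 0 ≠ 0 := by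
  intro h
  exact hg.minimal 0 (by rw [h]; exact AddSubmonoid.zero_mem _)

lemma g0_le_g (hg : MinGen g) (j : Fin (n + 1)) : g 0 ≤ g j :=
  hg.smono.monotone (Fin.zero_le j)

lemma g_ne_zero (hg : MinGen g) (j : Fin (n + 1)) : g j ≠ 0 := by
  have := g0_le_g hg j
  have := g0_ne_zero hg
  omega

lemma setM_add_S {h : ℕ} {x s : ℕ} (hx : x ∈ setM g h) (hs : s ∈ S g) :
    x + s ∈ setM g h := by
  induction h generalizing x with
  | zero => exact add_mem hx hs
  | succ h ih =>
    obtain ⟨u, hu, v, hv, huv⟩ := hx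
    have huv' : u + v = x := huv
    have : u + (v + s) = x + s := by omega
    exact this ▸ Set.add_mem_add hu (ih hv)

lemma setM_anti {h : ℕ} : setM g (h + 1) ⊆ setM g h := by
  rintro x ⟨u, hu, v, hv, huv⟩
  have huv' : u + v = x := huv
  have : v + u = x := by omega
  exact this ▸ setM_add_S hv hu.1

lemma setM_mono {h h' : ℕ} (hh : h ≤ h') : setM g h' ⊆ setM g h := by
  induction h' with
  | zero => intro x hx; exact Nat.le_zero.mp hh ▸ hx
  | succ h' ih =>
    rcases Nat.lt_or_ge h (h' + 1) with hlt | hge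
    · intro x hx; exact ih (by omega) (setM_anti hx)
    · intro x hx; have : h = h' + 1 := by omega
      exact this ▸ hx

lemma ordS_ge {h x : ℕ} (hx : x ∈ setM g h) : h ≤ ordS g x :=
  le_csSup ⟨x, fun h' hh' => le_of_mem_setM g h' x hh'⟩ hx

lemma mem_setM_of_le_ordS {h x : ℕ} (hx : x ∈ S g) (hh : h ≤ ordS g x) :
    x ∈ setM g h :=
  setM_mono hh (mem_setM_ordS g hx)

lemma ordS_add_g0 (hg : MinGen g) {x : ℕ} (hx : x ∈ S g) :
    ordS g x + 1 ≤ ordS g (x + g 0) := by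
  refine ordS_ge (h := ordS g x + 1) ?_
  have h1 : x + g 0 = g 0 + x := by omega
  rw [h1]
  exact Set.add_mem_add (show g 0 ∈ {u : ℕ | u ∈ S g ∧ u ≠ 0} from ⟨g_mem_S 0, g0_ne_zero hg⟩)
    (mem_setM_ordS g hx)

lemma setM_add {a b x y : ℕ} (hx : x ∈ setM g a) (hy : y ∈ setM g b) :
    x + y ∈ setM g (a + b) := by
  induction a generalizing x with
  | zero =>
    have h1 : x + y = y + x := by omega
    have h2 : (0 + b : ℕ) = b := by omega
    rw [h2, h1]
    exact setM_add_S hy hx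
  | succ a ih =>
    obtain ⟨u, hu, v, hv, huv⟩ := hx
    have huv' : u + v = x := huv
    have h1 : a + 1 + b = (a + b) + 1 := by omega
    have h2 : u + (v + y) = x + y := by omega
    rw [h1, ← h2]
    exact Set.add_mem_add hu (ih hv)

lemma mem_S_iff_sum {x : ℕ} :
    x ∈ S g ↔ ∃ c : Fin (n + 1) → ℕ, x = ∑ j, c j * g j := by
  constructor
  · intro hx
    induction hx using AddSubmonoid.closure_induction with
    | mem y hy =>
      obtain ⟨j, rfl⟩ := hy
      refine ⟨fun j' => if j' = j then 1 else 0, ?_⟩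
      simp [ite_mul]
    | zero => exact ⟨0, by simp⟩
    | add x y hx hy px py =>
      obtain ⟨c1, rfl⟩ := px; obtain ⟨c2, rfl⟩ := py
      exact ⟨c1 + c2, by simp [add_mul, Finset.sum_add_distrib]⟩
  · rintro ⟨c, rfl⟩
    refine sum_mem fun j _ => ?_
    have : c j * g j = c j • g j := by simp
    exact this ▸ AddSubmonoid.nsmul_mem _ (g_mem_S j) (c j)

lemma nsmul_g_mem_setM (hg : MinGen g) (m : ℕ) (j : Fin (n + 1)) :
    m * g j ∈ setM g m := by
  induction m with
  | zero => simp only [zero_mul]; exact AddSubmonoid.zero_mem (S g)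
  | succ m ih =>
    have h1 : (m + 1) * g j = g j + m * g j := by ring
    rw [h1]
    exact Set.add_mem_add ⟨g_mem_S j, g_ne_zero hg j⟩ ih

lemma sum_mem_setM (hg : MinGen g) (s : Finset (Fin (n + 1))) (c : Fin (n + 1) → ℕ) :
    ∑ j ∈ s, c j * g j ∈ setM g (∑ j ∈ s, c j) := by
  classical
  induction s using Finset.induction_on with
  | empty => simp only [Finset.sum_empty]; exact AddSubmonoid.zero_mem (S g)
  | insert _ _ hns ih =>
    rw [Finset.sum_insert hns, Finset.sum_insert hns]
    exact setM_add (nsmul_g_mem_setM hg _ _) ih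

lemma mem_setM_iff_sum (hg : MinGen g) {x h : ℕ} :
    x ∈ setM g h ↔ ∃ c : Fin (n + 1) → ℕ, h ≤ ∑ j, c j ∧ x = ∑ j, c j * g j := by
  constructor
  · intro hx
    induction h generalizing x with
    | zero =>
      obtain ⟨c, rfl⟩ := mem_S_iff_sum.mp hx
      exact ⟨c, by omega, rfl⟩
    | succ h ih =>
      obtain ⟨u, hu, v, hv, huv⟩ := hx
      have huv' : u + v = x := huv
      obtain ⟨c1, hc1⟩ := mem_S_iff_sum.mp hu.1
      obtain ⟨c2, hc2, hc2'⟩ := ih hv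
      have hone : 1 ≤ ∑ j, c1 j := by
        by_contra hc
        have hz : ∀ j ∈ Finset.univ, c1 j * g j = 0 := by
          intro j _
          have := Finset.single_le_sum (f := c1) (fun j _ => Nat.zero_le _) (Finset.mem_univ j)
          have : c1 j = 0 := by omega
          rw [this, zero_mul]
        rw [Finset.sum_congr rfl hz] at hc1
        exact hu.2 (by simpa using hc1)
      refine ⟨c1 + c2, ?_, ?_⟩
      · have : ∑ j, (c1 + c2) j = (∑ j, c1 j) + ∑ j, c2 j := by
          simp [Finset.sum_add_distrib]
        omega
      · have : ∑ j, (c1 + c2) j * g j = (∑ j, c1 j * g j) + ∑ j, c2 j * g j := by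
          simp [add_mul, Finset.sum_add_distrib]
        omega
  · rintro ⟨c, hc, rfl⟩
    exact setM_mono hc (by simpa using sum_mem_setM hg Finset.univ c)

lemma mem_S'_iff_sum (hg : MinGen g) {y : ℕ} :
    y ∈ S' g ↔ ∃ d : ℕ, ∃ c : Fin (n + 1) → ℕ,
      y = d * g 0 + ∑ j, c j * (g j - g 0) := by
  constructor
  · intro hy
    induction hy using AddSubmonoid.closure_induction with
    | mem z hz =>
      rcases hz with h | ⟨j, rfl⟩
      · exact ⟨1, 0, by simp [h]⟩
      · exact ⟨0, fun j' => if j' = j then 1 else 0, by simp [ite_mul]⟩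
    | zero => exact ⟨0, 0, by simp⟩
    | add x y hx hy px py =>
      obtain ⟨d1, c1, rfl⟩ := px; obtain ⟨d2, c2, rfl⟩ := py
      refine ⟨d1 + d2, c1 + c2, ?_⟩
      simp only [Pi.add_apply, add_mul, Finset.sum_add_distrib]
      ring
  · rintro ⟨d, c, rfl⟩
    refine add_mem ?_ ?_
    · have : d * g 0 = d • g 0 := by simp
      exact this ▸ AddSubmonoid.nsmul_mem _
        (AddSubmonoid.subset_closure (Set.mem_insert _ _)) d
    · refine sum_mem fun j _ => ?_
      have : c j * (g j - g 0) = c j • (g j - g 0) := by simp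
      exact this ▸ AddSubmonoid.nsmul_mem _
        (AddSubmonoid.subset_closure (Set.mem_insert_of_mem _ (Set.mem_range_self j))) (c j)

lemma S_le_S' (hg : MinGen g) {x : ℕ} (hx : x ∈ S g) : x ∈ S' g := by
  induction hx using AddSubmonoid.closure_induction with
  | mem y hy =>
    obtain ⟨j, rfl⟩ := hy
    have hle := g0_le_g hg j
    have : g j = (g j - g 0) + g 0 := by omega
    rw [this]
    exact add_mem (AddSubmonoid.subset_closure (Set.mem_insert_of_mem _ (Set.mem_range_self j)))
      (AddSubmonoid.subset_closure (Set.mem_insert _ _))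
  | zero => exact AddSubmonoid.zero_mem _
  | add x y hx hy px py => exact add_mem px py

lemma sum_split (hg : MinGen g) (c : Fin (n + 1) → ℕ) :
    ∑ j, c j * g j = (∑ j, c j) * g 0 + ∑ j, c j * (g j - g 0) := by
  rw [Finset.sum_mul, ← Finset.sum_add_distrib]
  refine Finset.sum_congr rfl fun j _ => ?_
  have hle := g0_le_g hg j
  have h1 : c j * (g j - g 0) = c j * g j - c j * g 0 := Nat.mul_sub _ _ _
  have h2 : c j * g 0 ≤ c j * g j := Nat.mul_le_mul_left _ hle
  omega

lemma setM_sub_mem_S' (hg : MinGen g) {x h : ℕ} (hx : x ∈ setM g h) :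
    h * g 0 ≤ x ∧ x - h * g 0 ∈ S' g := by
  obtain ⟨c, hc, rfl⟩ := (mem_setM_iff_sum hg).mp hx
  rw [sum_split hg c]
  set C := ∑ j, c j with hC
  set T := ∑ j, c j * (g j - g 0) with hT
  have h1 : h * g 0 ≤ C * g 0 := Nat.mul_le_mul_right _ hc
  refine ⟨by omega, ?_⟩
  have h2 : C * g 0 + T - h * g 0 = (C - h) * g 0 + T := by
    have : (C - h) * g 0 = C * g 0 - h * g 0 := Nat.sub_mul C h (g 0)
    omega
  rw [h2]
  exact (mem_S'_iff_sum hg).mpr ⟨C - h, c, rfl⟩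

lemma S'_add_mem_setM (hg : MinGen g) {y : ℕ} (hy : y ∈ S' g) :
    ∃ C : ℕ, ∀ h, C ≤ h → y + h * g 0 ∈ setM g h := by
  classical
  obtain ⟨d, c, rfl⟩ := (mem_S'_iff_sum hg).mp hy
  refine ⟨∑ j, c j, fun h hh => ?_⟩
  set C := ∑ j, c j with hC
  set T := ∑ j, c j * (g j - g 0) with hT
  set A := d + h - C with hA
  refine (mem_setM_iff_sum hg).mpr ⟨fun j => c j + (if j = 0 then A else 0), ?_, ?_⟩
  · have h1 : ∑ j, (c j + (if j = 0 then A else 0)) =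
        C + ∑ j, (if j = (0 : Fin (n + 1)) then A else 0) := by
      rw [Finset.sum_add_distrib]
    rw [h1, Finset.sum_ite_eq' Finset.univ (0 : Fin (n + 1)) (fun _ => A)]
    simp only [Finset.mem_univ, if_true]
    omega
  · have h1 : ∑ j, (c j + (if j = 0 then A else 0)) * g j =
        (∑ j, c j * g j) + ∑ j, (if j = (0 : Fin (n + 1)) then A * g j else 0) := by
      rw [← Finset.sum_add_distrib]
      refine Finset.sum_congr rfl fun j _ => by
        by_cases hj : j = 0 <;> simp [hj, add_mul]
    rw [h1, Finset.sum_ite_eq' Finset.univ (0 : Fin (n + 1)) (fun j => A * g j)]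
    simp only [Finset.mem_univ, if_true]
    rw [sum_split hg c, ← hC, ← hT]
    have e1 : A * g 0 = d * g 0 + h * g 0 - C * g 0 := by
      rw [hA, Nat.sub_mul, Nat.add_mul]
    have e2 : C * g 0 ≤ h * g 0 := Nat.mul_le_mul_right _ hh
    omega

end Comb

section RedNum

variable {n : ℕ} {g : Fin (n + 1) → ℕ}

/-- pigeonhole: removing one `g 0` from a long sum -/
lemma setM_succ_sub_comb (hg : MinGen g) {N x : ℕ} (hN : (n + 1) * g 0 ≤ N)
    (hx : x ∈ setM g (N + 1)) : g 0 ≤ x ∧ x - g 0 ∈ setM g N := by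
  classical
  have hg0 : 1 ≤ g 0 := Nat.one_le_iff_ne_zero.mpr (g0_ne_zero hg)
  obtain ⟨c, hc, rfl⟩ := (mem_setM_iff_sum hg).mp hx
  by_cases h0 : 1 ≤ c 0
  · have hle : g 0 ≤ c 0 * g 0 := by
      calc g 0 = 1 * g 0 := (one_mul _).symm
      _ ≤ c 0 * g 0 := Nat.mul_le_mul_right _ h0
    have hsplit : ∑ j, c j * g j = c 0 * g 0 + ∑ j ∈ Finset.univ.erase 0, c j * g j := by
      rw [← Finset.sum_erase_add _ _ (Finset.mem_univ (0 : Fin (n + 1)))]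
      exact Nat.add_comm _ _
    have hsplitc : ∑ j, c j = c 0 + ∑ j ∈ Finset.univ.erase 0, c j := by
      rw [← Finset.sum_erase_add _ _ (Finset.mem_univ (0 : Fin (n + 1)))]
      exact Nat.add_comm _ _
    constructor
    · omega
    · have he : ∑ j, c j * g j - g 0 =
          (c 0 - 1) * g 0 + ∑ j ∈ Finset.univ.erase 0, c j * g j := by
      -- (c 0 - 1) * g 0 = c 0 * g 0 - g 0
        have : (c 0 - 1) * g 0 = c 0 * g 0 - 1 * g 0 := Nat.sub_mul _ _ _
        omega
      rw [he]
      have m1 : (c 0 - 1) * g 0 ∈ setM g (c 0 - 1) := nsmul_g_mem_setM hg _ _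
      have m2 : ∑ j ∈ Finset.univ.erase 0, c j * g j ∈
          setM g (∑ j ∈ Finset.univ.erase 0, c j) := sum_mem_setM hg _ _
      refine setM_mono ?_ (setM_add m1 m2)
      omega
  · -- pigeonhole: some j with c j ≥ g 0, j ≠ 0
    have hpig : ∃ j, g 0 ≤ c j := by
      by_contra hcon
      push_neg at hcon
      have : ∑ j, c j ≤ (Finset.univ : Finset (Fin (n + 1))).card • (g 0 - 1) :=
        Finset.sum_le_card_nsmul _ _ _ (fun j _ => by have := hcon j; omega)
      simp only [Finset.card_univ, Fintype.card_fin, smul_eq_mul] at this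
      have hcard : (n + 1) * (g 0 - 1) + (n + 1) = (n + 1) * g 0 := by
        rw [← Nat.mul_succ]
        congr 1
        omega
      omega
    obtain ⟨j, hj⟩ := hpig
    have hj0 : j ≠ 0 := fun h => by rw [h] at hj; omega
    have hgj := g0_le_g hg j
    have hsplit : ∑ j', c j' * g j' = c j * g j + ∑ j' ∈ Finset.univ.erase j, c j' * g j' := by
      rw [← Finset.sum_erase_add _ _ (Finset.mem_univ j)]
      exact Nat.add_comm _ _
    have hsplitc : ∑ j', c j' = c j + ∑ j' ∈ Finset.univ.erase j, c j' := by
      rw [← Finset.sum_erase_add _ _ (Finset.mem_univ j)]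
      exact Nat.add_comm _ _
    set Rest := ∑ j' ∈ Finset.univ.erase j, c j' * g j' with hRest
    set m2 := ∑ j' ∈ Finset.univ.erase j, c j' with hm2
    have e1 : (c j - g 0) * g j = c j * g j - g 0 * g j := Nat.sub_mul _ _ _
    have e15 : g 0 * g j ≤ c j * g j := Nat.mul_le_mul_right _ hj
    have e2 : (g j - 1) * g 0 = g j * g 0 - 1 * g 0 := Nat.sub_mul _ _ _
    have e3 : g 0 * g j = g j * g 0 := Nat.mul_comm _ _
    have e4 : g 0 ≤ 1 * g j := by
      have : 1 * g j = g j := one_mul _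
      omega
    constructor
    · have hcj1 : 1 ≤ c j := by omega
      have hgj1 : g j ≤ c j * g j := Nat.le_mul_of_pos_left _ (by omega)
      omega
    · have hA1 : (c j - g 0) * g j + g 0 * g j = c j * g j := by
        rw [← Nat.add_mul, Nat.sub_add_cancel hj]
      have hA2 : (g j - 1) * g 0 + 1 * g 0 = g j * g 0 := by
        rw [← Nat.add_mul, Nat.sub_add_cancel (by omega : 1 ≤ g j)]
      have hA2' : 1 * g 0 = g 0 := one_mul _
      have he : ∑ j', c j' * g j' - g 0 =
          (g j - 1) * g 0 + ((c j - g 0) * g j + Rest) := by omega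
      rw [he]
      have m1 : (g j - 1) * g 0 ∈ setM g (g j - 1) := nsmul_g_mem_setM hg _ _
      have m2' : (c j - g 0) * g j ∈ setM g (c j - g 0) := nsmul_g_mem_setM hg _ _
      have m3 : Rest ∈ setM g m2 := sum_mem_setM hg _ _
      refine setM_mono ?_ (setM_add m1 (setM_add m2' m3))
      omega

variable (k : Type*) [Field k]

lemma supp_mI_subset {a : Rsub k g} (hg : MinGen g) (ha : a ∈ mI k g) :
    ∀ p, PowerSeries.coeff p a.val ≠ 0 → p ∈ S g ∧ p ≠ 0 := by
  refine Submodule.span_induction ?_ ?_ ?_ ?_ ha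
  · rintro x ⟨j, rfl⟩ p hp
    have hp' : PowerSeries.coeff p (tR k g (g j)).val ≠ 0 := hp
    rw [tR, dif_pos (g_mem_S j)] at hp'
    clear hp
    rename' hp' => hp
    simp only [PowerSeries.coeff_monomial] at hp
    split at hp
    · next heq => exact heq ▸ ⟨g_mem_S j, g_ne_zero hg j⟩
    · exact absurd rfl hp
  · intro p hp; simp at hp
  · intro x y _ _ px py p hp
    rw [AddMemClass.coe_add, map_add] at hp
    by_cases h : PowerSeries.coeff p x.val ≠ 0
    · exact px p h
    · push_neg at h
      rw [h, zero_add] at hp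
      exact py p hp
  · intro r x _ px p hp
    have : (r • x).val = r.val * x.val := rfl
    rw [this, PowerSeries.coeff_mul] at hp
    obtain ⟨q, hq, hne⟩ := Finset.exists_ne_zero_of_sum_ne_zero hp
    have h1 := r.prop q.1 (left_ne_zero_of_mul hne)
    have h2 := px q.2 (right_ne_zero_of_mul hne)
    have := Finset.HasAntidiagonal.mem_antidiagonal.mp hq
    exact this ▸ ⟨add_mem h1 h2.1, by omega⟩

lemma supp_pow_subset (hg : MinGen g) :
    ∀ (N : ℕ) (f : Rsub k g), f ∈ (mI k g) ^ N →
      ∀ x, PowerSeries.coeff x f.val ≠ 0 → x ∈ setM g N := by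
  intro N
  induction N with
  | zero => exact fun f _ x hx => f.prop x hx
  | succ N ih =>
    intro f hf
    rw [pow_succ'] at hf
    refine Submodule.mul_induction_on hf ?_ ?_
    · intro a ha b hb x hx
      rw [MulMemClass.coe_mul, PowerSeries.coeff_mul] at hx
      obtain ⟨q, hq, hne⟩ := Finset.exists_ne_zero_of_sum_ne_zero hx
      have h1 := supp_mI_subset k hg ha q.1 (left_ne_zero_of_mul hne)
      have h2 := ih b hb q.2 (right_ne_zero_of_mul hne)
      have := Finset.HasAntidiagonal.mem_antidiagonal.mp hq
      exact this ▸ Set.add_mem_add h1 h2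
    · intro x y px py p hp
      rw [AddMemClass.coe_add, map_add] at hp
      by_cases h : PowerSeries.coeff p x.val ≠ 0
      · exact px p h
      · push_neg at h
        rw [h, zero_add] at hp
        exact py p hp

lemma tR_mem_pow_iff (hg : MinGen g) {x N : ℕ} (hx : x ∈ S g) :
    tR k g x ∈ (mI k g) ^ N ↔ x ∈ setM g N := by
  constructor
  · intro h
    refine supp_pow_subset k hg N _ h x ?_
    rw [tR, dif_pos hx]
    simp [PowerSeries.coeff_monomial]
  · exact tR_mem_pow_of_setM k g N x

/-- finite sums of exactly `q` generators -/
def genSum (g : Fin (n + 1) → ℕ) : ℕ → Set ℕ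
  | 0 => {0}
  | q + 1 => {w | ∃ j, ∃ v ∈ genSum g q, w = g j + v}

lemma genSum_subset_setM (hg : MinGen g) {q v : ℕ} (hv : v ∈ genSum g q) :
    v ∈ setM g q := by
  induction q generalizing v with
  | zero =>
    obtain rfl : v = 0 := hv
    exact AddSubmonoid.zero_mem (S g)
  | succ q ih =>
    obtain ⟨j, w, hw, rfl⟩ := hv
    exact Set.add_mem_add (show g j ∈ {u : ℕ | u ∈ S g ∧ u ≠ 0} from
      ⟨g_mem_S j, g_ne_zero hg j⟩) (ih hw)

lemma genSum_mem_S (hg : MinGen g) {q v : ℕ} (hv : v ∈ genSum g q) : v ∈ S g :=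
  setM_subset g q (genSum_subset_setM hg hv)

lemma mul_mem_span_genSum (hg : MinGen g) :
    ∀ (q : ℕ) (u : ℕ), u ∈ S g → ∀ f ∈ (mI k g) ^ q,
      tR k g u * f ∈ Ideal.span ((fun v => tR k g (u + v)) '' genSum g q) := by
  intro q
  induction q with
  | zero =>
    intro u hu f _
    have himg : tR k g u ∈ (fun v => tR k g (u + v)) '' genSum g 0 :=
      ⟨0, rfl, by simp⟩
    have : tR k g u * f = f • tR k g u := by
      rw [smul_eq_mul, mul_comm]
    rw [this]
    exact Submodule.smul_mem _ f (Ideal.subset_span himg)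
  | succ q ih =>
    intro u hu f hf
    rw [pow_succ'] at hf
    refine Submodule.mul_induction_on hf ?_ ?_
    · intro a ha b hb
      have step1 : tR k g u * a ∈
          Ideal.span (Set.range fun j => tR k g (u + g j)) := by
        refine Submodule.span_induction ?_ ?_ ?_ ?_ ha
        · rintro x ⟨j, rfl⟩
          rw [← tR_mul k g hu (g_mem_S j)]
          exact Ideal.subset_span ⟨j, rfl⟩
        · rw [mul_zero]; exact zero_mem _
        · intro x y _ _ px py
          rw [mul_add]; exact add_mem px py
        · intro r x _ px
          rw [smul_eq_mul, ← mul_assoc, mul_comm _ r, mul_assoc]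
          exact Ideal.mul_mem_left _ r px
      have step2 : ∀ z ∈ Ideal.span (Set.range fun j => tR k g (u + g j)),
          z * b ∈ Ideal.span ((fun v => tR k g (u + v)) '' genSum g (q + 1)) := by
        intro z hz
        refine Submodule.span_induction ?_ ?_ ?_ ?_ hz
        · rintro x ⟨j, rfl⟩
          have h1 := ih (u + g j) (add_mem hu (g_mem_S j)) b hb
          refine Ideal.span_mono ?_ h1
          rintro y ⟨v, hv, rfl⟩
          refine ⟨g j + v, ⟨j, v, hv, rfl⟩, ?_⟩
          show tR k g (u + (g j + v)) = tR k g (u + g j + v)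
          rw [← add_assoc]
        · rw [zero_mul]; exact zero_mem _
        · intro x y _ _ px py
          rw [add_mul]; exact add_mem px py
        · intro r x _ px
          have e : (r • x) * b = r • (x * b) := by
            rw [smul_eq_mul, smul_eq_mul]; ring
          rw [e]
          exact Submodule.smul_mem _ r px
      have e : tR k g u * (a * b) = (tR k g u * a) * b := by ring
      rw [e]
      exact step2 _ step1
    · intro x y px py
      rw [mul_add]
      exact add_mem px py

lemma mul_pow_mem (hg : MinGen g) {q u N : ℕ} (hu : u ∈ S g)
    (hN : ∀ v ∈ genSum g q, u + v ∈ setM g N) {f : Rsub k g} (hf : f ∈ (mI k g) ^ q) :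
    tR k g u * f ∈ (mI k g) ^ N := by
  refine Ideal.span_le.mpr ?_ (mul_mem_span_genSum k hg q u hu f hf)
  rintro y ⟨v, hv, rfl⟩
  exact tR_mem_pow_of_setM k g N _ (hN v hv)

lemma pow_succ_eq_span_mul (hg : MinGen g) {N : ℕ} (hN : (n + 1) * g 0 ≤ N) :
    (mI k g) ^ (N + 1) = Ideal.span {tR k g (g 0)} * (mI k g) ^ N := by
  apply le_antisymm
  · intro f hf
    have h1 : tR k g 0 * f ∈ Ideal.span ((fun v => tR k g (0 + v)) '' genSum g (N + 1)) :=
      mul_mem_span_genSum k hg (N + 1) 0 (AddSubmonoid.zero_mem _) f hf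
    have h0 : tR k g 0 = 1 := by
      unfold tR
      rw [dif_pos (AddSubmonoid.zero_mem _)]
      exact Subtype.ext (by simp)
    rw [h0, one_mul] at h1
    refine Ideal.span_le.mpr ?_ h1
    rintro y ⟨v, hv, rfl⟩
    simp only [zero_add]
    have hv' := genSum_subset_setM hg hv
    obtain ⟨hle, hmem⟩ := setM_succ_sub_comb hg hN hv'
    have e : v = g 0 + (v - g 0) := by omega
    rw [e, tR_mul k g (g_mem_S 0) (setM_subset g N hmem)]
    exact Ideal.mul_mem_mul (Ideal.subset_span rfl) (tR_mem_pow_of_setM k g N _ hmem)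
  · have h1 : Ideal.span {tR k g (g 0)} ≤ mI k g :=
      Ideal.span_le.mpr (by rintro y rfl; exact tR_mem_mI k g (g_mem_S 0) (g0_ne_zero hg))
    calc Ideal.span {tR k g (g 0)} * (mI k g) ^ N ≤ mI k g * (mI k g) ^ N :=
          Ideal.mul_mono_left h1
    _ = (mI k g) ^ (N + 1) := (pow_succ' _ _).symm

lemma rnum_pow_succ (hg : MinGen g) :
    ∀ N, rnum k g ≤ N →
      (mI k g) ^ (N + 1) = Ideal.span {tR k g (g 0)} * (mI k g) ^ N := by
  have hne : {j | (mI k g) ^ (j + 1) = Ideal.span {tR k g (g 0)} * (mI k g) ^ j}.Nonempty :=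
    ⟨(n + 1) * g 0, pow_succ_eq_span_mul k hg le_rfl⟩
  have hbase : (mI k g) ^ (rnum k g + 1) =
      Ideal.span {tR k g (g 0)} * (mI k g) ^ rnum k g := Nat.sInf_mem hne
  intro N hN
  obtain ⟨m, rfl⟩ := Nat.exists_eq_add_of_le hN
  induction m with
  | zero => exact hbase
  | succ m ih =>
    have e : rnum k g + (m + 1) + 1 = (rnum k g + m + 1) + 1 := by omega
    calc (mI k g) ^ (rnum k g + (m + 1) + 1)
        = (mI k g) ^ (rnum k g + m + 1) * mI k g := by rw [e]; exact pow_succ _ _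
      _ = (Ideal.span {tR k g (g 0)} * (mI k g) ^ (rnum k g + m)) * mI k g := by
          rw [ih (by omega)]
      _ = Ideal.span {tR k g (g 0)} * ((mI k g) ^ (rnum k g + m) * mI k g) :=
          mul_assoc _ _ _
      _ = Ideal.span {tR k g (g 0)} * (mI k g) ^ (rnum k g + (m + 1)) := by
          rw [← pow_succ]
          have e3 : rnum k g + m + 1 = rnum k g + (m + 1) := by omega
          rw [e3]

lemma setM_succ_iff (hg : MinGen g) {N x : ℕ} (hN : rnum k g ≤ N) :
    x ∈ setM g (N + 1) ↔ g 0 ≤ x ∧ x - g 0 ∈ setM g N := by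
  constructor
  · intro hx
    have hxS : x ∈ S g := setM_subset g _ hx
    have h1 : tR k g x ∈ (mI k g) ^ (N + 1) := tR_mem_pow_of_setM k g _ _ hx
    rw [rnum_pow_succ k hg N hN] at h1
    obtain ⟨c, hc, hc'⟩ := Ideal.mem_span_singleton_mul.mp h1
    have hval : (tR k g (g 0)).val * c.val = (tR k g x).val := by
      rw [← MulMemClass.coe_mul, hc']
    rw [tR, dif_pos (g_mem_S 0), tR, dif_pos hxS] at hval
    have hcoeff : ∀ p, PowerSeries.coeff p
        ((PowerSeries.monomial (g 0)) 1 * c.val) =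
        if p = x then 1 else 0 := by
      intro p
      rw [hval]
      exact PowerSeries.coeff_monomial p x 1
    have hg0x : g 0 ≤ x := by
      by_contra hcon
      have hx1 := hcoeff x
      rw [if_pos rfl, PowerSeries.coeff_mul] at hx1
      have hzero : ∀ q ∈ Finset.HasAntidiagonal.antidiagonal x,
          PowerSeries.coeff q.1 ((PowerSeries.monomial (g 0)) 1) *
            PowerSeries.coeff q.2 c.val = 0 := by
        intro q hq
        have hq' := Finset.HasAntidiagonal.mem_antidiagonal.mp hq
        rw [PowerSeries.coeff_monomial]
        have hne1 : q.1 ≠ g 0 := by omega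
        rw [if_neg hne1, zero_mul]
      rw [Finset.sum_eq_zero hzero] at hx1
      exact one_ne_zero hx1.symm
    refine ⟨hg0x, ?_⟩
    have hco : PowerSeries.coeff (x - g 0) c.val ≠ 0 := by
      have hx1 := hcoeff x
      rw [if_pos rfl, PowerSeries.coeff_mul] at hx1
      have hsum : ∀ q ∈ Finset.HasAntidiagonal.antidiagonal x,
          PowerSeries.coeff q.1 ((PowerSeries.monomial (g 0)) 1) *
            PowerSeries.coeff q.2 c.val =
          if q = ((g 0, x - g 0) : ℕ × ℕ) then PowerSeries.coeff (x - g 0) c.val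
          else 0 := by
        intro q hq
        have hq' := Finset.HasAntidiagonal.mem_antidiagonal.mp hq
        rw [PowerSeries.coeff_monomial]
        by_cases h1 : q.1 = g 0
        · have h2 : q.2 = x - g 0 := by omega
          rw [if_pos h1, one_mul, if_pos (Prod.ext h1 h2), h2]
        · rw [if_neg h1, zero_mul,
            if_neg (fun hcon2 => h1 (by rw [hcon2]))]
      rw [Finset.sum_congr rfl hsum, Finset.sum_ite_eq'
        (Finset.HasAntidiagonal.antidiagonal x) ((g 0, x - g 0) : ℕ × ℕ)
        (fun _ => PowerSeries.coeff (x - g 0) c.val),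
        if_pos (Finset.HasAntidiagonal.mem_antidiagonal.mpr (by omega))] at hx1
      rw [hx1]
      exact one_ne_zero
    exact supp_pow_subset k hg N c hc _ hco
  · rintro ⟨h1, h2⟩
    have e : x = g 0 + (x - g 0) := by omega
    rw [e]
    exact Set.add_mem_add (show g 0 ∈ {u : ℕ | u ∈ S g ∧ u ≠ 0} from
      ⟨g_mem_S 0, g0_ne_zero hg⟩) h2

lemma key_iff (hg : MinGen g) {h x : ℕ} (hr : rnum k g ≤ h) :
    x ∈ setM g h ↔ h * g 0 ≤ x ∧ x - h * g 0 ∈ S' g := by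
  constructor
  · exact setM_sub_mem_S' hg
  · rintro ⟨h1, h2⟩
    obtain ⟨C, hC⟩ := S'_add_mem_setM hg h2
    have main : ∀ (m : ℕ), (x - h * g 0) + (h + m) * g 0 ∈ setM g (h + m) →
        (x - h * g 0) + h * g 0 ∈ setM g h := by
      intro m
      induction m with
      | zero => exact fun hx => hx
      | succ m ih =>
        intro hx
        have e : h + (m + 1) = (h + m) + 1 := by omega
        rw [e] at hx
        have hstep := (setM_succ_iff k hg (by omega)).mp hx
        have e2 : (x - h * g 0) + ((h + m) + 1) * g 0 - g 0 =
            (x - h * g 0) + (h + m) * g 0 := by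
          have : ((h + m) + 1) * g 0 = (h + m) * g 0 + g 0 := by ring
          omega
        rw [e2] at hstep
        exact ih hstep.2
    have hfin : (x - h * g 0) + h * g 0 ∈ setM g h := by
      rcases le_or_gt C h with hch | hch
      · exact main 0 (by simpa using hC h hch)
      · exact main (C - h) (by
          have e : h + (C - h) = C := by omega
          rw [e]
          exact hC C le_rfl)
    have e : (x - h * g 0) + h * g 0 = x := by omega
    rwa [e] at hfin

end RedNum

section Rees

variable {n : ℕ} {g : Fin (n + 1) → ℕ} (k : Type*) [Field k]

lemma tR_zero_eq_one : tR k g 0 = 1 := by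
  rw [tR, dif_pos (AddSubmonoid.zero_mem _)]
  exact Subtype.ext (by simp)

lemma tR_pow {s : ℕ} (hs : s ∈ S g) (c : ℕ) : (tR k g s) ^ c = tR k g (c * s) := by
  induction c with
  | zero =>
    rw [pow_zero, zero_mul, tR_zero_eq_one]
  | succ c ih =>
    have hcs : c * s ∈ S g := by
      have e : c * s = c • s := by simp
      exact e ▸ AddSubmonoid.nsmul_mem _ hs c
    have e : (c + 1) * s = s + c * s := by ring
    rw [pow_succ, ih, e, tR_mul k g hs hcs]
    exact mul_comm _ _

/-- coefficientwise bound for products of polynomials over `Rsub` -/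
lemma coeff_mul_bound {x y : Polynomial (Rsub k g)} {F G H : ℕ → ℕ}
    (hx : ∀ p, x.coeff p ∈ (mI k g) ^ F p) (hy : ∀ q, y.coeff q ∈ (mI k g) ^ G q)
    (hH : ∀ p q, H (p + q) ≤ F p + G q) :
    ∀ e, (x * y).coeff e ∈ (mI k g) ^ H e := by
  intro e
  rw [Polynomial.coeff_mul]
  refine Submodule.sum_mem _ fun q hq => ?_
  have hq' := Finset.HasAntidiagonal.mem_antidiagonal.mp hq
  have h1 : (mI k g) ^ (F q.1 + G q.2) ≤ (mI k g) ^ H e := by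
    refine Ideal.pow_le_pow_right ?_
    rw [← hq']
    exact hH q.1 q.2
  refine h1 ?_
  rw [pow_add]
  exact Ideal.mul_mem_mul (hx q.1) (hy q.2)

/-- the ideal `T j` of the Rees algebra: coefficient in degree `e` lies in `m^max(e,j)` -/
def Tid (j : ℕ) : Ideal (reesAlgebra (mI k g)) where
  carrier := {f | ∀ e, (f : Polynomial (Rsub k g)).coeff e ∈ (mI k g) ^ max e j}
  zero_mem' := by intro e; simp
  add_mem' := by
    intro a b ha hb e
    rw [AddMemClass.coe_add, Polynomial.coeff_add]
    exact add_mem (ha e) (hb e)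
  smul_mem' := by
    intro r f hf e
    have : (r • f : reesAlgebra (mI k g)) = r * f := rfl
    rw [this]
    have hcoe : ((r * f : reesAlgebra (mI k g)) : Polynomial (Rsub k g)) = r.val * f.val :=
      rfl
    rw [hcoe]
    refine coeff_mul_bound k (F := id) (G := fun q => max q j) (H := fun e => max e j)
      ?_ hf (fun p q => by show max (p + q) j ≤ id p + max q j; simp [id]; omega) e
    exact fun p => (mem_reesAlgebra_iff (mI k g) r.val).mp r.prop p

/-- the ideal of elements with coefficients in `m^(e+1)` -/
def Kp : Ideal (reesAlgebra (mI k g)) where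
  carrier := {f | ∀ e, (f : Polynomial (Rsub k g)).coeff e ∈ (mI k g) ^ (e + 1)}
  zero_mem' := by intro e; simp
  add_mem' := by
    intro a b ha hb e
    rw [AddMemClass.coe_add, Polynomial.coeff_add]
    exact add_mem (ha e) (hb e)
  smul_mem' := by
    intro r f hf e
    have hcoe : ((r • f : reesAlgebra (mI k g)) : Polynomial (Rsub k g)) = r.val * f.val :=
      rfl
    rw [hcoe]
    refine coeff_mul_bound k (F := id) (G := fun q => q + 1) (H := fun e => e + 1)
      ?_ hf (fun p q => by show (p + q) + 1 ≤ id p + (q + 1); simp [id]) e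
    exact fun p => (mem_reesAlgebra_iff (mI k g) r.val).mp r.prop p

/-- `J'`, the preimage of `m` under evaluation at 0 -/
def JJ : Ideal (reesAlgebra (mI k g)) :=
  Ideal.comap ((Polynomial.evalRingHom (0 : Rsub k g)).comp
    (reesAlgebra (mI k g)).val.toRingHom) (mI k g)

lemma MM_eq_map : MM k g = Ideal.map (Ideal.Quotient.mk _) (JJ k (g := g)) := rfl

lemma mem_JJ_iff {f : reesAlgebra (mI k g)} :
    f ∈ JJ k (g := g) ↔ (f : Polynomial (Rsub k g)).coeff 0 ∈ mI k g := by
  rw [JJ, Ideal.mem_comap]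
  rw [Polynomial.coeff_zero_eq_eval_zero]
  rfl

lemma JJ_coeff_bound {f : reesAlgebra (mI k g)} (hf : f ∈ JJ k (g := g)) :
    ∀ q, (f : Polynomial (Rsub k g)).coeff q ∈ (mI k g) ^ max q 1 := by
  intro q
  cases q with
  | zero =>
    have := (mem_JJ_iff k).mp hf
    simpa using this
  | succ q =>
    have := (mem_reesAlgebra_iff (mI k g) f.val).mp f.prop (q + 1)
    have e : max (q + 1) 1 = q + 1 := by omega
    rw [e]
    exact this

lemma JJ_pow_le_Tid (j : ℕ) : (JJ k (g := g)) ^ j ≤ Tid k j := by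
  induction j with
  | zero =>
    intro f _
    intro e
    have := (mem_reesAlgebra_iff (mI k g) f.val).mp f.prop e
    have he : max e 0 = e := by omega
    rw [he]
    exact this
  | succ j ih =>
    rw [pow_succ]
    refine Submodule.mul_le.mpr fun x hx y hy => ?_
    intro e
    have hcoe : ((x * y : reesAlgebra (mI k g)) : Polynomial (Rsub k g)) = x.val * y.val :=
      rfl
    rw [hcoe]
    exact coeff_mul_bound k (F := fun p => max p j) (G := fun q => max q 1)
      (H := fun e => max e (j + 1)) (ih hx) (JJ_coeff_bound k hy)
      (fun p q => by show max (p + q) (j + 1) ≤ max p j + max q 1; omega) e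

/-- `K ⊆ K'`: the extension of `m` has coefficients in `m^(e+1)` -/
lemma map_le_Kp :
    Ideal.map (algebraMap (Rsub k g) (reesAlgebra (mI k g))) (mI k g) ≤ Kp k := by
  rw [Ideal.map_le_iff_le_comap]
  intro a ha
  rw [Ideal.mem_comap]
  intro e
  have hcoe : ((algebraMap (Rsub k g) (reesAlgebra (mI k g)) a : reesAlgebra (mI k g)) :
      Polynomial (Rsub k g)) = Polynomial.C a := rfl
  rw [hcoe, Polynomial.coeff_C]
  split
  · next he =>
      subst he
      simpa using ha
  · exact zero_mem _

lemma monomial_mem_K {e : ℕ} {c : Rsub k g} (hc : c ∈ (mI k g) ^ (e + 1)) :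
    ∀ hmem : (Polynomial.monomial e c) ∈ reesAlgebra (mI k g),
      (⟨Polynomial.monomial e c, hmem⟩ : reesAlgebra (mI k g)) ∈
        Ideal.map (algebraMap (Rsub k g) (reesAlgebra (mI k g))) (mI k g) := by
  rw [pow_succ'] at hc
  refine (Submodule.mul_induction_on (C := fun c =>
      ((Polynomial.monomial e c) ∈ reesAlgebra (mI k g)) ∧
      ∀ hmem : (Polynomial.monomial e c) ∈ reesAlgebra (mI k g),
        (⟨Polynomial.monomial e c, hmem⟩ : reesAlgebra (mI k g)) ∈
          Ideal.map (algebraMap (Rsub k g) (reesAlgebra (mI k g))) (mI k g))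
    hc ?_ ?_).2
  · intro a ha b hb
    have hbmem : (Polynomial.monomial e b) ∈ reesAlgebra (mI k g) :=
      reesAlgebra.monomial_mem.mpr hb
    have hab1 : a * b ∈ (mI k g) ^ (e + 1) := by
      rw [pow_succ']
      exact Ideal.mul_mem_mul ha hb
    have habe : a * b ∈ (mI k g) ^ e :=
      Ideal.pow_le_pow_right (by omega) hab1
    refine ⟨reesAlgebra.monomial_mem.mpr habe, fun hmem => ?_⟩
    have he : (⟨Polynomial.monomial e (a * b), hmem⟩ : reesAlgebra (mI k g)) =
        algebraMap (Rsub k g) (reesAlgebra (mI k g)) a * ⟨Polynomial.monomial e b, hbmem⟩ := by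
      apply Subtype.ext
      show Polynomial.monomial e (a * b) = Polynomial.C a * Polynomial.monomial e b
      rw [Polynomial.C_mul_monomial]
    rw [he]
    exact Ideal.mul_mem_right _ _ (Ideal.mem_map_of_mem _ ha)
  · rintro x y ⟨hxm, px⟩ ⟨hym, py⟩
    have hxy : (Polynomial.monomial e (x + y)) ∈ reesAlgebra (mI k g) := by
      rw [map_add]; exact add_mem hxm hym
    refine ⟨hxy, fun hmem => ?_⟩
    have he : (⟨Polynomial.monomial e (x + y), hmem⟩ : reesAlgebra (mI k g)) =
        ⟨Polynomial.monomial e x, hxm⟩ + ⟨Polynomial.monomial e y, hym⟩ := by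
      apply Subtype.ext
      show Polynomial.monomial e (x + y) =
        Polynomial.monomial e x + Polynomial.monomial e y
      rw [map_add]
    rw [he]
    exact add_mem (px hxm) (py hym)

lemma Kp_le_map :
    Kp k (g := g) ≤ Ideal.map (algebraMap (Rsub k g) (reesAlgebra (mI k g))) (mI k g) := by
  intro f hf
  classical
  have hdecomp : f = ∑ e ∈ Finset.range (f.val.natDegree + 1),
      (⟨Polynomial.monomial e (f.val.coeff e),
        reesAlgebra.monomial_mem.mpr
          ((Ideal.pow_le_pow_right (by omega)) (hf e))⟩ : reesAlgebra (mI k g)) := by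
    apply Subtype.ext
    rw [AddSubmonoidClass.coe_finset_sum]
    exact Polynomial.as_sum_range' f.val _ (by omega)
  rw [hdecomp]
  refine Submodule.sum_mem _ fun e _ => ?_
  exact monomial_mem_K k (hf e) _

end Rees

section MainLemmas

variable {n : ℕ} {g : Fin (n + 1) → ℕ} (k : Type*) [Field k]

lemma mem_map_pow_aux {A : Type*} [CommRing A] (I J : Ideal A) (r : ℕ) (p : A ⧸ I)
    (hp : p ∈ Ideal.map (Ideal.Quotient.mk I) J ^ r) :
    ∃ f ∈ J ^ r, Ideal.Quotient.mk I f = p := by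
  rw [← Ideal.map_pow] at hp
  exact (Ideal.mem_map_iff_of_surjective _ Ideal.Quotient.mk_surjective).mp hp

lemma tstar_mem_annM (hg : MinGen g) {u : ℕ} (hu : u ∈ S g)
    (hcomb : ∀ q, rnum k g ≤ q → ∀ v ∈ genSum g q,
      u + v ∈ setM g (ordS g u + q + 1)) :
    tstar k g u ∈ annM k g := by
  refine Submodule.mem_colon.mpr ?_
  intro p hp
  rw [MM_eq_map] at hp
  obtain ⟨f, hf, rfl⟩ := mem_map_pow_aux _ _ _ _ hp
  rw [smul_eq_mul, Submodule.mem_bot]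
  have htstar : tstar k g u = Ideal.Quotient.mk _
      (⟨Polynomial.monomial (ordS g u) (tR k g u),
        reesAlgebra.monomial_mem.mpr (tR_mem_pow k g u)⟩ : reesAlgebra (mI k g)) := rfl
  rw [htstar, ← map_mul, Ideal.Quotient.eq_zero_iff_mem]
  refine Kp_le_map k ?_
  show ∀ e : ℕ, _
  intro e
  have hval : (((⟨Polynomial.monomial (ordS g u) (tR k g u),
        reesAlgebra.monomial_mem.mpr (tR_mem_pow k g u)⟩ : reesAlgebra (mI k g)) * f :
      reesAlgebra (mI k g)) : Polynomial (Rsub k g)) =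
      (f.val * Polynomial.X ^ (ordS g u)) * Polynomial.C (tR k g u) := by
    show Polynomial.monomial (ordS g u) (tR k g u) * f.val = _
    rw [← Polynomial.C_mul_X_pow_eq_monomial]
    ring
  rw [hval, Polynomial.coeff_mul_C, Polynomial.coeff_mul_X_pow']
  split
  · next hde =>
    set d := ordS g u with hd
    set e' := e - d with he'
    set q := max e' (rnum k g) with hq
    have hfT : f.val.coeff e' ∈ (mI k g) ^ q := (JJ_pow_le_Tid k (rnum k g) hf) e'
    have hmm : tR k g u * f.val.coeff e' ∈ (mI k g) ^ (d + q + 1) :=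
      mul_pow_mem k hg hu
        (fun v hv => hcomb q (le_max_right _ _) v hv) hfT
    rw [mul_comm]
    refine Ideal.pow_le_pow_right ?_ hmm
    have h1 : e' ≤ q := le_max_left _ _
    omega
  · rw [zero_mul]; exact zero_mem _

lemma annM_ord_bound (hg : MinGen g) {u : ℕ} (hu : u ∈ S g)
    (hm : tstar k g u ∈ annM k g) :
    (ordS g u + 1) * g 0 ≤ u ∧ u - (ordS g u + 1) * g 0 ∈ S' g := by
  have hg0S : g 0 ∈ S g := g_mem_S 0
  set r := rnum k g with hrdef
  set d := ordS g u with hd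
  have hmono1 : (Polynomial.monomial 1 (tR k g (g 0))) ∈ reesAlgebra (mI k g) :=
    reesAlgebra.monomial_mem.mpr
      (by rw [pow_one]; exact tR_mem_mI k g hg0S (g0_ne_zero hg))
  have hf0J : (⟨Polynomial.monomial 1 (tR k g (g 0)), hmono1⟩ : reesAlgebra (mI k g)) ∈
      JJ k (g := g) := by
    rw [mem_JJ_iff]
    show (Polynomial.monomial 1 (tR k g (g 0))).coeff 0 ∈ mI k g
    rw [Polynomial.coeff_monomial, if_neg (by omega)]
    exact zero_mem _
  have hp : (Ideal.Quotient.mk _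
      ((⟨Polynomial.monomial 1 (tR k g (g 0)), hmono1⟩ : reesAlgebra (mI k g)) ^ r)) ∈
      (MM k g) ^ r := by
    rw [MM_eq_map, map_pow]
    exact Ideal.pow_mem_pow (Ideal.mem_map_of_mem _ hf0J) r
  have h0 := Submodule.mem_colon.mp hm _ hp
  have htstar : tstar k g u = Ideal.Quotient.mk _
      (⟨Polynomial.monomial d (tR k g u),
        reesAlgebra.monomial_mem.mpr (tR_mem_pow k g u)⟩ : reesAlgebra (mI k g)) := rfl
  rw [smul_eq_mul, Submodule.mem_bot, htstar, ← map_mul,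
    Ideal.Quotient.eq_zero_iff_mem] at h0
  have hKp := map_le_Kp k h0
  have hrg0 : r * g 0 ∈ S g := by
    have e : r * g 0 = r • g 0 := by simp
    exact e ▸ AddSubmonoid.nsmul_mem _ hg0S r
  have hval : (((⟨Polynomial.monomial d (tR k g u),
        reesAlgebra.monomial_mem.mpr (tR_mem_pow k g u)⟩ : reesAlgebra (mI k g)) *
      (⟨Polynomial.monomial 1 (tR k g (g 0)), hmono1⟩ : reesAlgebra (mI k g)) ^ r :
      reesAlgebra (mI k g)) : Polynomial (Rsub k g)) =
      Polynomial.monomial (d + r) (tR k g (u + r * g 0)) := by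
    show Polynomial.monomial d (tR k g u) * (Polynomial.monomial 1 (tR k g (g 0))) ^ r = _
    rw [Polynomial.monomial_pow, one_mul, tR_pow k hg0S r,
      Polynomial.monomial_mul_monomial, ← tR_mul k g hu hrg0]
  have hc := hKp (d + r)
  rw [hval, Polynomial.coeff_monomial, if_pos rfl] at hc
  have hmem : u + r * g 0 ∈ setM g (d + r + 1) :=
    (tR_mem_pow_iff k hg (add_mem hu hrg0)).mp hc
  obtain ⟨h1, h2⟩ := setM_sub_mem_S' hg hmem
  have e1 : (d + r + 1) * g 0 = (d + 1) * g 0 + r * g 0 := by ring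
  constructor
  · omega
  · have e2 : u + r * g 0 - (d + r + 1) * g 0 = u - (d + 1) * g 0 := by omega
    rwa [e2] at h2

lemma exists_mem_S_mod (hg : MinGen g) {i : ℕ} (hi : i < g 0) :
    ∃ s ∈ S g, s % g 0 = i := by
  classical
  have hg0 : 1 ≤ g 0 := Nat.one_le_iff_ne_zero.mpr (g0_ne_zero hg)
  set I : Ideal ℤ := Ideal.span (Set.range fun j : Fin (n + 1) => (g j : ℤ)) with hI
  have hgcd : ∀ t : Finset (Fin (n + 1)), ((t.gcd g : ℕ) : ℤ) ∈ I := by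
    intro t
    induction t using Finset.induction_on with
    | empty => simpa using zero_mem I
    | @insert a t' hns ih =>
      rw [Finset.gcd_insert]
      have hgcdeq : (gcd (g a) (t'.gcd g) : ℕ) = Nat.gcd (g a) (t'.gcd g) := rfl
      rw [hgcdeq]
      rw [show ((Nat.gcd (g a) (t'.gcd g) : ℕ) : ℤ) =
        (g a : ℤ) * Nat.gcdA (g a) (t'.gcd g) +
        ((t'.gcd g : ℕ) : ℤ) * Nat.gcdB (g a) (t'.gcd g) from Nat.gcd_eq_gcd_ab _ _]
      exact add_mem (Ideal.mul_mem_right _ _ (Ideal.subset_span ⟨a, rfl⟩))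
        (Ideal.mul_mem_right _ _ ih)
  have hone : (1 : ℤ) ∈ I := by
    have := hgcd Finset.univ
    rw [hg.gcdeq] at this
    simpa using this
  obtain ⟨c, hc⟩ := Ideal.mem_span_range_iff_exists_fun.mp hone
  have hNnn : ∀ j : Fin (n + 1), (0 : ℤ) ≤ c j + ((c j).natAbs : ℤ) * (g 0 : ℤ) := by
    intro j
    have ha : -(((c j).natAbs : ℤ)) ≤ c j := by
      rw [← Int.abs_eq_natAbs]
      exact neg_abs_le _
    have hb : ((c j).natAbs : ℤ) * 1 ≤ ((c j).natAbs : ℤ) * (g 0 : ℤ) := by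
      refine mul_le_mul_of_nonneg_left ?_ (by positivity)
      exact_mod_cast hg0
    linarith
  set N : Fin (n + 1) → ℕ := fun j => (c j + ((c j).natAbs : ℤ) * (g 0 : ℤ)).toNat with hN
  have hNcast : ∀ j, (N j : ℤ) = c j + ((c j).natAbs : ℤ) * (g 0 : ℤ) := fun j =>
    Int.toNat_of_nonneg (hNnn j)
  set s := ∑ j, N j * g j with hs
  have hsS : s ∈ S g := by
    refine sum_mem fun j _ => ?_
    have e : N j * g j = N j • g j := by simp
    exact e ▸ AddSubmonoid.nsmul_mem _ (g_mem_S j) (N j)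
  set T := ∑ j, (c j).natAbs * g j with hT
  have hcast : (s : ℤ) = 1 + (g 0 : ℤ) * (T : ℤ) := by
    have h1 : (s : ℤ) = ∑ j, (N j : ℤ) * (g j : ℤ) := by
      rw [hs]; push_cast; ring
    have h2 : (T : ℤ) = ∑ j, ((c j).natAbs : ℤ) * (g j : ℤ) := by
      rw [hT]; push_cast; ring
    rw [h1, h2]
    have h3 : ∀ j ∈ Finset.univ, (N j : ℤ) * (g j : ℤ) =
        c j * g j + (g 0 : ℤ) * (((c j).natAbs : ℤ) * (g j : ℤ)) := by
      intro j _
      rw [hNcast j]; ring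
    rw [Finset.sum_congr rfl h3, Finset.sum_add_distrib, ← Finset.mul_sum, hc]
  have hTnn : s = 1 + g 0 * T := by exact_mod_cast hcast
  refine ⟨i * s, ?_, ?_⟩
  · have e : i * s = i • s := by simp
    exact e ▸ AddSubmonoid.nsmul_mem _ hsS i
  · rw [hTnn]
    have e : i * (1 + g 0 * T) = i + g 0 * (i * T) := by ring
    rw [e, Nat.add_mul_mod_self_left]
    exact Nat.mod_eq_of_lt hi

end MainLemmas

/-- Lemma 2a. Let `i` be an index with `a_i > b_i` and let
`l_i = max { l | t^{ω_i + l g_1}* ∈ (0 :_{G(m)} 𝓜^r) }`. Then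
`t^{ω_i + l g_1}* ∈ (0 :_{G(m)} 𝓜^r)` for every `l = 0, 1, …, l_i`. -/
theorem statement0 {k : Type*} [Field k] [Infinite k] {n : ℕ} (g : Fin (n + 1) → ℕ)
    (hg : MinGen g) (i : ℕ) (hi : i < g 0) (hab : bb g i < aa g i)
    (l : ℕ) (hl : l ≤ lℓ k g i) :
    tstar k g (ap g i + l * g 0) ∈ annM k g := by
  classical
  have hg0 : 1 ≤ g 0 := Nat.one_le_iff_ne_zero.mpr (g0_ne_zero hg)
  set ω := ap g i with hωdef
  set r := rnum k g with hrdef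
  set a := aa g i with hadef
  have hSne : {s | s ∈ S g ∧ s % g 0 = i}.Nonempty := by
    obtain ⟨s, hs1, hs2⟩ := exists_mem_S_mod hg hi
    exact ⟨s, hs1, hs2⟩
  have hωmem : ω ∈ S g ∧ ω % g 0 = i := Nat.sInf_mem hSne
  have hS'ne : {s | s ∈ S' g ∧ s % g 0 = i}.Nonempty :=
    ⟨ω, S_le_S' hg hωmem.1, hωmem.2⟩
  have hω'mem : ap' g i ∈ S' g ∧ ap' g i % g 0 = i := Nat.sInf_mem hS'ne
  have hω'le : ap' g i ≤ ω := Nat.sInf_le ⟨S_le_S' hg hωmem.1, hωmem.2⟩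
  have hdvd : g 0 ∣ ω - ap' g i := by
    have h1 : ap' g i ≡ ω [MOD g 0] := by
      show ap' g i % g 0 = ω % g 0
      rw [hωmem.2, hω'mem.2]
    exact (Nat.modEq_iff_dvd' hω'le).mp h1
  have heq : ω = ap' g i + a * g 0 := by
    have h1 : a = (ω - ap' g i) / g 0 := rfl
    have h2 : a * g 0 = ω - ap' g i := by
      rw [h1, Nat.div_mul_cancel hdvd]
    omega
  have humemS : ∀ m : ℕ, ω + m * g 0 ∈ S g := by
    intro m
    refine add_mem hωmem.1 ?_
    have e : m * g 0 = m • g 0 := by simp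
    exact e ▸ AddSubmonoid.nsmul_mem _ (g_mem_S 0) m
  -- the key equivalence
  have hequiv : ∀ m : ℕ,
      tstar k g (ω + m * g 0) ∈ annM k g ↔ ordS g (ω + m * g 0) < a + m := by
    intro m
    constructor
    · intro hmem
      obtain ⟨hle2, hS'2⟩ := annM_ord_bound k hg (humemS m) hmem
      set d := ordS g (ω + m * g 0) with hddef
      have hmod : (ω + m * g 0 - (d + 1) * g 0) % g 0 = i := by
        have h2 : (ω + m * g 0) % g 0 = i := by
          rw [Nat.add_mul_mod_self_right, hωmem.2]
        have e : ω + m * g 0 = (ω + m * g 0 - (d + 1) * g 0) + (d + 1) * g 0 := by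
          omega
        rw [e, Nat.add_mul_mod_self_right] at h2
        exact h2
      have hge : ap' g i ≤ ω + m * g 0 - (d + 1) * g 0 :=
        Nat.sInf_le ⟨hS'2, hmod⟩
      have e2 : ω + m * g 0 = ap' g i + (a + m) * g 0 := by
        rw [heq]; ring
      have h3 : (d + 1) * g 0 ≤ (a + m) * g 0 := by omega
      have h4 : d + 1 ≤ a + m :=
        Nat.le_of_mul_le_mul_right h3 (by omega)
      omega
    · intro hlt
      refine tstar_mem_annM k hg (humemS m) ?_
      intro q hq v hv
      have hvM := genSum_subset_setM hg hv
      obtain ⟨hvle, hvS'⟩ := setM_sub_mem_S' hg hvM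
      have e2 : ω + m * g 0 = ap' g i + (a + m) * g 0 := by
        rw [heq]; ring
      have e3 : (a + m + q) * g 0 = (a + m) * g 0 + q * g 0 := by ring
      have hords : a + m + q ≤ ordS g (ω + m * g 0 + v) := by
        refine ordS_ge ((key_iff k hg (h := a + m + q) (by omega)).mpr ⟨?_, ?_⟩)
        · omega
        · have e4 : ω + m * g 0 + v - (a + m + q) * g 0 =
              ap' g i + (v - q * g 0) := by omega
          rw [e4]
          exact add_mem hω'mem.1 hvS'
      refine mem_setM_of_le_ordS (add_mem (humemS m) (setM_subset g q hvM)) ?_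
      omega
  -- basic properties of the combinatorial set
  have hB0 : ordS g (ω + 0 * g 0) < a + 0 := by
    have e : ω + 0 * g 0 = ω := by ring
    rw [e]
    exact hab
  have hstep : ∀ m : ℕ, a + m ≤ ordS g (ω + m * g 0) →
      a + (m + 1) ≤ ordS g (ω + (m + 1) * g 0) := by
    intro m hm
    have h1 := ordS_add_g0 hg (humemS m)
    have e : ω + m * g 0 + g 0 = ω + (m + 1) * g 0 := by ring
    rw [e] at h1
    omega
  have hBdown : ∀ m m' : ℕ, m ≤ m' → ordS g (ω + m' * g 0) < a + m' →
      ordS g (ω + m * g 0) < a + m := by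
    intro m m' hmm hm'
    by_contra hcon
    push_neg at hcon
    have hall : ∀ t : ℕ, a + (m + t) ≤ ordS g (ω + (m + t) * g 0) := by
      intro t
      induction t with
      | zero => simpa using hcon
      | succ t ih =>
        have e : m + (t + 1) = (m + t) + 1 := by omega
        rw [e]
        exact hstep (m + t) ih
    have := hall (m' - m)
    have e : m + (m' - m) = m' := by omega
    rw [e] at this
    omega
  have hBbound : ∀ m : ℕ, r ≤ m → a + m ≤ ordS g (ω + m * g 0) := by
    intro m hrm
    refine ordS_ge ((key_iff k hg (h := a + m) (by omega)).mpr ⟨?_, ?_⟩)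
    · have e2 : ω + m * g 0 = ap' g i + (a + m) * g 0 := by rw [heq]; ring
      omega
    · have e4 : ω + m * g 0 - (a + m) * g 0 = ap' g i := by
        have e2 : ω + m * g 0 = ap' g i + (a + m) * g 0 := by rw [heq]; ring
        omega
      rw [e4]
      exact hω'mem.1
  -- the sup is attained
  have hBne : 0 ∈ {m : ℕ | tstar k g (ω + m * g 0) ∈ annM k g} :=
    (hequiv 0).mpr hB0
  have hbdd : BddAbove {m : ℕ | tstar k g (ω + m * g 0) ∈ annM k g} := by
    refine ⟨r, fun m hm => ?_⟩
    have h1 := (hequiv m).mp hm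
    by_contra hcon
    push_neg at hcon
    have := hBbound m (by omega)
    omega
  have hsup : tstar k g (ω + lℓ k g i * g 0) ∈ annM k g := by
    have e : lℓ k g i = sSup {m : ℕ | tstar k g (ω + m * g 0) ∈ annM k g} := rfl
    have := Nat.sSup_mem ⟨0, hBne⟩ hbdd
    rw [← e] at this
    exact this
  exact (hequiv l).mpr (hBdown l (lℓ k g i) hl ((hequiv _).mp hsup))

end NumSgrp
end
end

section
/- Let i be an index and let ω_i = α_2 g_2 + ⋯ + α_n g_n be a representation with nonnegative integers α_k satisfying Σ_{k=2}^n α_k = b_i. If a_i = b_i, then α_2(g_2−g_1) + ⋯ + α_n(g_n−g_1) = ω'_i, which lies in Ap_{g_1}(S'). If instead a_i > b_i, then α_2(g_2−g_1) + ⋯ + α_n(g_n−g_1) ∉ Ap_{g_1}(S'). -/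
/-!
Common setup: the numerical semigroup ring `R = k[[t^S]]`, its maximal ideal `m`,
the associated graded ring `G(m)` (realized as the Rees algebra `R[mt]` modulo
the extension of `m`, the standard presentation of `⊕_{h≥0} m^h/m^{h+1}`),
the homogeneous maximal ideal `𝓜`, the reduction number `r`, initial forms
`t^s*`, Apery sets, the invariants `a_i`, `b_i`, `l_i`, the order function,
the partial order `≤_M`, symmetry, `M`-purity, Buchsbaumness and
Cohen-Macaulayness (via their characterizations `(0:𝓜) = (0:𝓜^r)` and
`(0:𝓜^r) = 0` valid in this one-dimensional graded setting).
-/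

set_option maxHeartbeats 1000000
set_option synthInstance.maxHeartbeats 1000000

open scoped Pointwise
open Polynomial

noncomputable section

namespace NumSgrp

variable (k : Type*) [Field k] {n : ℕ} (g : Fin (n + 1) → ℕ)

lemma aux_g0_pos {n : ℕ} (g : Fin (n + 1) → ℕ) (hg : MinGen g) : 0 < g 0 := by
  rcases Nat.eq_zero_or_pos (g 0) with h | h
  · exfalso
    apply hg.minimal 0
    rw [h]
    exact (AddSubmonoid.closure _).zero_mem
  · exact h

lemma aux_bezout {n : ℕ} (g : Fin (n + 1) → ℕ) (h : Finset.univ.gcd g = 1) :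
    ∃ c : Fin (n + 1) → ℤ, ∑ j, c j * (g j : ℤ) = 1 := by
  have h1 : (1 : ℤ) ∈ Submodule.span ℤ (Set.range fun j => (g j : ℤ)) := by
    obtain ⟨d, hd⟩ := (IsPrincipalIdealRing.principal
      (Ideal.span (Set.range fun j => (g j : ℤ))))
    have hdvd : ∀ j, d ∣ (g j : ℤ) := by
      intro j
      have hm : (g j : ℤ) ∈ Ideal.span (Set.range fun j => (g j : ℤ)) :=
        Ideal.subset_span ⟨j, rfl⟩
      rw [hd] at hm
      exact Ideal.mem_span_singleton.mp hm
    have hgcd : d.natAbs ∣ Finset.univ.gcd g := by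
      refine Finset.dvd_gcd fun j _ => ?_
      have := Int.natAbs_dvd_natAbs.mpr (hdvd j)
      simpa using this
    rw [h, Nat.dvd_one] at hgcd
    have hd1 : d ∣ 1 := by
      rw [← Int.natAbs_dvd_natAbs, hgcd]; exact one_dvd _
    have h2 : (1 : ℤ) ∈ Submodule.span ℤ ({d} : Set ℤ) :=
      Ideal.mem_span_singleton.mpr hd1
    show (1 : ℤ) ∈ Ideal.span (Set.range fun j => (g j : ℤ))
    rw [hd]; exact h2
  obtain ⟨c, hc⟩ := (Finsupp.mem_span_range_iff_exists_finsupp).mp h1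
  refine ⟨c, ?_⟩
  rw [← hc, Finsupp.sum_fintype]
  · simp [smul_eq_mul]
  · intro j; simp

lemma aux_exists_mod {n : ℕ} (g : Fin (n + 1) → ℕ) (hg : MinGen g)
    (i : ℕ) (hi : i < g 0) : ∃ s ∈ S g, s % g 0 = i := by
  obtain ⟨c, hc⟩ := aux_bezout g hg.gcdeq
  have hpos : (0 : ℤ) < (g 0 : ℤ) := by exact_mod_cast aux_g0_pos g hg
  set e : Fin (n + 1) → ℕ := fun j => ((i : ℤ) * c j % (g 0 : ℤ)).toNat with he
  refine ⟨∑ j, e j * g j, ?_, ?_⟩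
  · refine AddSubmonoid.sum_mem _ fun j _ => ?_
    have hgj : g j ∈ S g := AddSubmonoid.subset_closure ⟨j, rfl⟩
    simpa [smul_eq_mul] using nsmul_mem hgj (e j)
  · have hcast : ∀ j, ((e j : ℤ)) = (i : ℤ) * c j % (g 0 : ℤ) := fun j =>
      Int.toNat_of_nonneg (Int.emod_nonneg _ (ne_of_gt hpos))
    have key : (∑ j, (e j : ℤ) * (g j : ℤ)) % (g 0 : ℤ) = (i : ℤ) := by
      have h2 : ∀ j, ((e j : ℤ)) * (g j : ℤ) % (g 0 : ℤ)
          = ((i : ℤ) * c j * (g j : ℤ)) % (g 0 : ℤ) := by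
        intro j
        rw [hcast j, Int.mul_emod, Int.emod_emod_of_dvd _ dvd_rfl, ← Int.mul_emod]
      calc (∑ j, (e j : ℤ) * (g j : ℤ)) % (g 0 : ℤ)
          = (∑ j, (i : ℤ) * c j * (g j : ℤ)) % (g 0 : ℤ) := by
            rw [Finset.sum_int_mod, Finset.sum_congr rfl fun j _ => h2 j,
              ← Finset.sum_int_mod]
        _ = ((i : ℤ) * ∑ j, c j * (g j : ℤ)) % (g 0 : ℤ) := by
            rw [Finset.mul_sum]
            congr 1
            exact Finset.sum_congr rfl fun j _ => (mul_assoc _ _ _)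
        _ = (i : ℤ) := by
            rw [hc, mul_one]
            exact Int.emod_eq_of_lt (by positivity) (by exact_mod_cast hi)
    have key2 : (((∑ j, e j * g j) % g 0 : ℕ) : ℤ) = (i : ℤ) := by
      push_cast
      exact key
    exact_mod_cast key2

lemma aux_ap_spec {n : ℕ} (g : Fin (n + 1) → ℕ) (hg : MinGen g)
    (i : ℕ) (hi : i < g 0) : ap g i ∈ S g ∧ ap g i % g 0 = i := by
  have hne : {s | s ∈ S g ∧ s % g 0 = i}.Nonempty := by
    obtain ⟨s, hs1, hs2⟩ := aux_exists_mod g hg i hi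
    exact ⟨s, hs1, hs2⟩
  exact Nat.sInf_mem hne


/-- Remark 20. Let `i` be an index and let
`ω_i = α_2 g_2 + ⋯ + α_n g_n` be a representation with `Σ α_k = b_i`. If
`a_i = b_i`, then `α_2(g_2−g_1) + ⋯ + α_n(g_n−g_1) = ω'_i`, which lies in
`Ap_{g_1}(S')`. If instead `a_i > b_i`, then
`α_2(g_2−g_1) + ⋯ + α_n(g_n−g_1) ∉ Ap_{g_1}(S')`. -/
theorem statement12 {n : ℕ} (g : Fin (n + 1) → ℕ) (hg : MinGen g)
    (i : ℕ) (hi : i < g 0) (α : Fin (n + 1) → ℕ) (hα0 : α 0 = 0)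
    (hrep : ap g i = ∑ j, α j * g j) (hsum : ∑ j, α j = bb g i) :
    (aa g i = bb g i →
      (∑ j, α j * (g j - g 0)) = ap' g i ∧ (∑ j, α j * (g j - g 0)) ∈ apSet' g) ∧
    (bb g i < aa g i → (∑ j, α j * (g j - g 0)) ∉ apSet' g) := by
  have hg0 : 0 < g 0 := aux_g0_pos g hg
  obtain ⟨hωS, hωmod⟩ := aux_ap_spec g hg i hi
  have hle : ∀ j, g 0 ≤ g j := fun j => hg.smono.monotone (Fin.zero_le j)
  -- The key identity: T + b·g₀ = ω
  have hTb : (∑ j, α j * (g j - g 0)) + bb g i * g 0 = ap g i := by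
    rw [hrep, ← hsum, Finset.sum_mul, ← Finset.sum_add_distrib]
    refine Finset.sum_congr rfl fun j _ => ?_
    rw [← Nat.mul_add, Nat.sub_add_cancel (hle j)]
  have hTmod : (∑ j, α j * (g j - g 0)) % g 0 = i := by
    have h1 : (((∑ j, α j * (g j - g 0)) + bb g i * g 0)) % g 0
        = (∑ j, α j * (g j - g 0)) % g 0 := Nat.add_mul_mod_self_right _ _ _
    rw [hTb, hωmod] at h1
    exact h1.symm
  have hTS' : (∑ j, α j * (g j - g 0)) ∈ S' g := by
    refine AddSubmonoid.sum_mem _ fun j _ => ?_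
    have hj : g j - g 0 ∈ S' g :=
      AddSubmonoid.subset_closure (Set.mem_insert_of_mem _ ⟨j, rfl⟩)
    simpa [smul_eq_mul] using nsmul_mem hj (α j)
  have hne' : {s | s ∈ S' g ∧ s % g 0 = i}.Nonempty := ⟨_, hTS', hTmod⟩
  obtain ⟨hω'S, hω'mod⟩ : ap' g i ∈ S' g ∧ ap' g i % g 0 = i := Nat.sInf_mem hne'
  have hω'le : ap' g i ≤ (∑ j, α j * (g j - g 0)) := Nat.sInf_le ⟨hTS', hTmod⟩
  have hω'ω : ap' g i ≤ ap g i := le_trans hω'le (le_trans (Nat.le_add_right _ _) hTb.le)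
  have hdvd : g 0 ∣ ap g i - ap' g i := by
    refine (Nat.modEq_iff_dvd' hω'ω).mp ?_
    show ap' g i % g 0 = ap g i % g 0
    rw [hω'mod, hωmod]
  have haa : aa g i * g 0 = ap g i - ap' g i := Nat.div_mul_cancel hdvd
  have hωeq : ap g i = ap' g i + aa g i * g 0 := by omega
  have hkey : (∑ j, α j * (g j - g 0)) + bb g i * g 0 = ap' g i + aa g i * g 0 :=
    hTb.trans hωeq
  constructor
  · intro hab
    have hT : (∑ j, α j * (g j - g 0)) = ap' g i := by
      rw [hab] at hkey
      exact Nat.add_right_cancel hkey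
    exact ⟨hT, ⟨i, hi, hT⟩⟩
  · intro hba hmem
    have h1 : aa g i * g 0 = (aa g i - bb g i) * g 0 + bb g i * g 0 := by
      rw [← Nat.add_mul, Nat.sub_add_cancel hba.le]
    have hTeq : (∑ j, α j * (g j - g 0)) = ap' g i + (aa g i - bb g i) * g 0 := by
      rw [h1, ← Nat.add_assoc] at hkey
      exact Nat.add_right_cancel hkey
    have hpos2 : 0 < (aa g i - bb g i) * g 0 := Nat.mul_pos (by omega) hg0
    have hTgt : ap' g i < (∑ j, α j * (g j - g 0)) := by
      rw [hTeq]; exact Nat.lt_add_of_pos_right hpos2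
    obtain ⟨j, hj, hTj⟩ := hmem
    by_cases hne2 : {s | s ∈ S' g ∧ s % g 0 = j}.Nonempty
    · obtain ⟨hm1, hm2⟩ : ap' g j ∈ S' g ∧ ap' g j % g 0 = j := Nat.sInf_mem hne2
      rw [← hTj, hTmod] at hm2
      rw [← hm2] at hTj
      omega
    · rw [Set.not_nonempty_iff_eq_empty] at hne2
      have hz : ap' g j = 0 := by
        show sInf {s | s ∈ S' g ∧ s % g 0 = j} = 0
        rw [hne2, Nat.sInf_empty]
      omega


end NumSgrp
end
end
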